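/- Let G be a finite group acting linearly on a finite F_q-vector space V. Let α(G) be the proportion of elements of G having eigenvalue 1 on V (i.e., fixing some nonzero vector), and δ the proportion of derangements of V ⋊ G acting on V. Then (1 - 1/q)·α(G) ≤ δ ≤ α(G). -/

import Mathlib

open Finset

theorem stmt_1 (F : Type*) [Field F] [Fintype F] (G : Type*) [Group G] [Fintype G]
    (V : Type*) [AddCommGroup V] [Module F V] [Fintype V] [DecidableEq V]
    (ρ : Representation F G V)
    (α δ : ℝ)
    (hα : α = ((univ.filter (fun g : G => ∃ v : V, v ≠ 0 ∧ ρ g v = v)).card : ℝ) /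
        (Fintype.card G))
    (hδ : δ = ((univ.filter (fun p : G × V => ∀ v : V, ρ p.1 v + p.2 ≠ v)).card : ℝ) /
        (Fintype.card G * Fintype.card V)) :
    (1 - 1 / (Fintype.card F : ℝ)) * α ≤ δ ∧ δ ≤ α := by
  classical
  set N : G → ℕ := fun g => (univ.filter (fun w : V => ∀ v : V, ρ g v + w ≠ v)).card with hN
  set A : Finset G := univ.filter (fun g : G => ∃ v : V, v ≠ 0 ∧ ρ g v = v) with hA
  set D : ℕ := (univ.filter (fun p : G × V => ∀ v : V, ρ p.1 v + p.2 ≠ v)).card with hD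
  set f : G → V →ₗ[F] V := fun g => LinearMap.id - (ρ g : V →ₗ[F] V) with hf
  have hfval : ∀ g (v : V), f g v = v - ρ g v := fun g v => rfl
  have hNdesc : ∀ g : G, N g = Fintype.card V - Nat.card (LinearMap.range (f g)) := by
    intro g
    have hset : (univ.filter (fun w : V => ∀ v : V, ρ g v + w ≠ v)) =
        univ \ (univ.filter (fun w : V => w ∈ LinearMap.range (f g))) := by
      ext w
      simp only [mem_filter, mem_sdiff, mem_univ, true_and, LinearMap.mem_range]
      constructor
      · rintro h ⟨v, hv⟩
        exact h v (by rw [← hv, hfval]; abel)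
      · intro h v hv
        exact h ⟨v, by rw [hfval, eq_comm, eq_sub_iff_add_eq, add_comm]; exact hv⟩
    simp only [hN]
    rw [hset, card_sdiff_of_subset (subset_univ _), card_univ]
    congr 1
    rw [← Nat.card_eq_finsetCard]
    exact Nat.card_congr (Equiv.subtypeEquivRight (fun w => by simp))
  have hsplit : D = ∑ g : G, N g := by
    simp only [hD, hN, Finset.card_filter]
    rw [Fintype.sum_prod_type]
  have hzero : ∀ g : G, g ∉ A → N g = 0 := by
    intro g hg
    rw [hA] at hg
    simp only [mem_filter, mem_univ, true_and, not_exists, not_and] at hg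
    have hinj : Function.Injective (f g) := by
      rw [← LinearMap.ker_eq_bot, LinearMap.ker_eq_bot']
      intro v hv
      by_contra hv0
      rw [hfval, sub_eq_zero, eq_comm] at hv
      exact hg v hv0 hv
    have hsurj : Function.Surjective (f g) := Finite.injective_iff_surjective.mp hinj
    simp only [hN, Finset.card_eq_zero, Finset.filter_eq_empty_iff]
    intro w _
    push_neg
    obtain ⟨v, hv⟩ := hsurj w
    exact ⟨v, by rw [← hv, hfval]; abel⟩
  have hq1 : (1:ℝ) ≤ (Fintype.card F : ℝ) := by exact_mod_cast Fintype.card_pos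
  have hqpos : (0:ℝ) < (Fintype.card F : ℝ) := lt_of_lt_of_le one_pos hq1
  -- bounds for g ∈ A
  have hupper : ∀ g : G, (N g : ℝ) ≤ Fintype.card V := by
    intro g
    have : N g ≤ Fintype.card V := by
      simp only [hN]
      exact le_trans (card_filter_le _ _) (le_of_eq card_univ)
    exact_mod_cast this
  have hlower : ∀ g ∈ A, (1 - 1 / (Fintype.card F : ℝ)) * Fintype.card V ≤ (N g : ℝ) := by
    intro g hg
    rw [hA] at hg
    simp only [mem_filter, mem_univ, true_and] at hg
    obtain ⟨v, hv0, hv⟩ := hg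
    set r := Nat.card (LinearMap.range (f g)) with hr
    set k := Nat.card (LinearMap.ker (f g)) with hk
    have hcard : Nat.card V = k * r := by
      rw [hk, hr, Submodule.card_eq_card_quotient_mul_card (LinearMap.ker (f g))]
      congr 1
      exact Nat.card_congr (f g).quotKerEquivRange.toEquiv
    have hkF : Fintype.card F ≤ k := by
      have hinj : Function.Injective (fun c : F => (⟨c • v, by
          simp only [LinearMap.mem_ker, hfval, map_smul]
          rw [hv]; abel⟩ : LinearMap.ker (f g))) := by
        intro a b hab
        simp only [Subtype.mk.injEq] at hab
        exact smul_left_injective F hv0 hab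
      calc Fintype.card F = Nat.card F := (Nat.card_eq_fintype_card).symm
        _ ≤ k := Nat.card_le_card_of_injective _ hinj
    have hk1 : 1 ≤ k := le_trans Fintype.card_pos hkF
    have hrV : r ≤ Fintype.card V := by
      calc r = 1 * r := (one_mul r).symm
        _ ≤ k * r := Nat.mul_le_mul_right r hk1
        _ = Nat.card V := hcard.symm
        _ = Fintype.card V := Nat.card_eq_fintype_card
    have hNg : (N g : ℝ) = (Fintype.card V : ℝ) - r := by
      rw [hNdesc g, Nat.cast_sub hrV]
    rw [hNg]
    have hcardR : (Fintype.card V : ℝ) = (k : ℝ) * r := by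
      rw [← Nat.card_eq_fintype_card]; exact_mod_cast hcard
    have hqk : (Fintype.card F : ℝ) ≤ k := by exact_mod_cast hkF
    have hrnn : (0:ℝ) ≤ r := Nat.cast_nonneg r
    have key : (Fintype.card F : ℝ) * r ≤ Fintype.card V := by
      rw [hcardR]; exact mul_le_mul_of_nonneg_right hqk hrnn
    rw [sub_mul, one_mul]
    rw [sub_le_sub_iff_left]
    rw [div_mul_eq_mul_div, le_div_iff₀ hqpos, one_mul, mul_comm (r:ℝ)]
    linarith
  -- sum bounds
  have hDA : (D : ℝ) = ∑ g ∈ A, (N g : ℝ) := by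
    rw [hsplit]
    push_cast
    rw [← Finset.sum_subset (subset_univ A)]
    intro g _ hg
    rw [hzero g hg]; norm_num
  have key1 : (1 - 1 / (Fintype.card F : ℝ)) * A.card * Fintype.card V ≤ D := by
    rw [hDA]
    calc (1 - 1 / (Fintype.card F : ℝ)) * A.card * Fintype.card V
        = ∑ _g ∈ A, (1 - 1 / (Fintype.card F : ℝ)) * Fintype.card V := by
          rw [Finset.sum_const, nsmul_eq_mul]; ring
      _ ≤ ∑ g ∈ A, (N g : ℝ) := Finset.sum_le_sum hlower
  have key2 : (D : ℝ) ≤ A.card * Fintype.card V := by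
    rw [hDA]
    calc ∑ g ∈ A, (N g : ℝ) ≤ ∑ _g ∈ A, (Fintype.card V : ℝ) :=
          Finset.sum_le_sum (fun g _ => hupper g)
      _ = A.card * Fintype.card V := by rw [Finset.sum_const, nsmul_eq_mul]
  have hGpos : (0:ℝ) < Fintype.card G := by exact_mod_cast Fintype.card_pos
  have hVpos : (0:ℝ) < Fintype.card V := by exact_mod_cast Fintype.card_pos
  constructor
  · rw [hδ, hα]
    have heq : (1 - 1 / (Fintype.card F : ℝ)) * ((A.card : ℝ) / Fintype.card G)
        = ((1 - 1 / (Fintype.card F : ℝ)) * A.card * Fintype.card V) /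
          (Fintype.card G * Fintype.card V) := by
      field_simp
    rw [heq]
    gcongr
  · rw [hδ, hα]
    have heq : ((A.card : ℝ) / Fintype.card G)
        = ((A.card : ℝ) * Fintype.card V) / (Fintype.card G * Fintype.card V) := by
      field_simp
    rw [heq]
    gcongr
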